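/- For natural numbers ℓ, j, n with n ≥ 3 and j even satisfying 2 ≤ j ≤ 2ℓ, if ε(j,ℓ,n) := 2j((j+n)/2 - 1)/(2ℓ+n) ≤ 1, then λ(n,ℓ,0)/λ(n,ℓ,j) - 1 ≤ ε(j,ℓ,n). -/

import Mathlib

open MeasureTheory Real

/-- The Gegenbauer polynomial (in dimension `n`) given by the Rodrigues formula. -/
noncomputable def gegenbauerP (n j : ℕ) (t : ℝ) : ℝ :=
  (-(1 : ℝ) / 2) ^ j * (Real.Gamma (((n : ℝ) - 1) / 2) / Real.Gamma ((j : ℝ) + ((n : ℝ) - 1) / 2)) *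
    (1 - t ^ 2) ^ (-(((n : ℝ) - 3) / 2)) *
    iteratedDeriv j (fun s : ℝ => (1 - s ^ 2) ^ ((j : ℝ) + ((n : ℝ) - 3) / 2)) t

/-- The Funk–Hecke coefficient `λ(n,ℓ,j) = ∫₋₁¹ t^(2ℓ) P_j(t) (1-t²)^((n-3)/2) dt`. -/
noncomputable def lamFH (n ℓ j : ℕ) : ℝ :=
  ∫ t in (-1 : ℝ)..(1 : ℝ), t ^ (2 * ℓ) * gegenbauerP n j t * (1 - t ^ 2) ^ (((n : ℝ) - 3) / 2)

section FunkHeckeAux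
open Finset Polynomial

open MeasureTheory Real Finset Polynomial

noncomputable def Wfn (γ : ℝ) (t : ℝ) : ℝ := (1 - t^2) ^ γ

lemma Wfn_succ {γ : ℝ} (hγ : 1 ≤ γ) (t : ℝ) : Wfn γ t = Wfn (γ-1) t * (1 - t^2) := by
  rcases eq_or_ne (1 - t^2) 0 with h | h
  · simp [Wfn, h, Real.zero_rpow (by linarith : γ ≠ 0)]
  · have h2 := Real.rpow_add_one h (γ - 1)
    rw [sub_add_cancel] at h2
    simp [Wfn, h2]

lemma hasDerivAt_Wfn {γ : ℝ} (hγ : 1 ≤ γ) (t : ℝ) :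
    HasDerivAt (Wfn γ) ((γ * (-2*t)) * Wfn (γ-1) t) t := by
  have h1 : HasDerivAt (fun t : ℝ => 1 - t^2) (-2*t) t := by
    simpa using ((hasDerivAt_pow 2 t).const_sub 1)
  have h2 := (Real.hasDerivAt_rpow_const (x := 1 - t^2) (p := γ) (Or.inr hγ)).comp t h1
  refine h2.congr_deriv (Eq.symm ?_)
  simp [Wfn]; ring

noncomputable def gp (β : ℝ) : ℕ → Polynomial ℝ
  | 0 => 1
  | k+1 => derivative (gp β k) * (1 - X^2) - C (2*(β - k)) * X * gp β k

noncomputable def Phi (β : ℝ) (k : ℕ) (t : ℝ) : ℝ := (gp β k).eval t * Wfn (β - k) t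

lemma hasDerivAt_Phi {β : ℝ} {k : ℕ} (hk : (k:ℝ) + 1 ≤ β) (t : ℝ) :
    HasDerivAt (Phi β k) (Phi β (k+1) t) t := by
  have hγ : 1 ≤ β - k := by linarith
  have h := ((gp β k).hasDerivAt t).mul (hasDerivAt_Wfn hγ t)
  refine h.congr_deriv (Eq.symm ?_)
  have e1 : β - ((k+1 : ℕ):ℝ) = β - k - 1 := by push_cast; ring
  unfold Phi
  rw [e1, Wfn_succ hγ t]
  simp [gp]
  ring

lemma iteratedDeriv_Wfn_eq {β : ℝ} {j : ℕ} (hβ : (j:ℝ) ≤ β) {k : ℕ} (hk : k ≤ j) :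
    iteratedDeriv k (Wfn β) = Phi β k := by
  induction k with
  | zero => funext t; simp [Phi, gp, Wfn]
  | succ k ih =>
      rw [iteratedDeriv_succ, ih (by omega)]
      funext t
      refine (hasDerivAt_Phi ?_ t).deriv
      have : ((k:ℝ) + 1) ≤ (j:ℝ) := by exact_mod_cast hk
      linarith

lemma Phi_boundary {β : ℝ} {k : ℕ} (hk : (k:ℝ) < β) {t : ℝ} (ht : t^2 = 1) : Phi β k t = 0 := by
  simp [Phi, Wfn, ht, Real.zero_rpow (by intro h; rw [sub_eq_zero] at h; exact absurd h.symm (ne_of_lt hk))]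

lemma continuous_Wfn {γ : ℝ} (hγ : 0 ≤ γ) : Continuous (Wfn γ) := by
  have h : Continuous fun x : ℝ => x ^ γ :=
    continuous_iff_continuousAt.mpr fun x => Real.continuousAt_rpow_const x γ (Or.inr hγ)
  exact h.comp (by continuity)

lemma continuous_Phi {β : ℝ} {k : ℕ} (hk : (k:ℝ) ≤ β) : Continuous (Phi β k) :=
  ((gp β k).continuous).mul (continuous_Wfn (by linarith))

lemma hasDerivAt_G (N k : ℕ) (t : ℝ) :
    HasDerivAt (fun t : ℝ => ((N.descFactorial k : ℝ)) * t^(N-k))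
      ((N.descFactorial (k+1) : ℝ) * t^(N-(k+1))) t := by
  have h := ((hasDerivAt_pow (N-k) t).const_mul ((N.descFactorial k : ℝ)))
  refine h.congr_deriv (Eq.symm ?_)
  have e : N - (k+1) = N - k - 1 := by omega
  rw [e, Nat.descFactorial_succ, Nat.cast_mul]
  ring

lemma iteratedDeriv_pow_eq (N : ℕ) : ∀ k, iteratedDeriv k (fun x : ℝ => x ^ N)
    = fun x => (N.descFactorial k : ℝ) * x ^ (N - k)
  | 0 => by simp
  | (k+1) => by
      rw [iteratedDeriv_succ, iteratedDeriv_pow_eq N k]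
      funext t
      exact (hasDerivAt_G N k t).deriv


noncomputable def Kint (m : ℕ) (γ : ℝ) : ℝ := ∫ t in (-1:ℝ)..1, t^(2*m) * Wfn γ t

lemma Wfn_zero {γ : ℝ} (hγ : γ ≠ 0) {t : ℝ} (ht : t^2 = 1) : Wfn γ t = 0 := by
  simp [Wfn, ht, Real.zero_rpow hγ]

lemma intInt {k : ℕ} {γ : ℝ} (hγ : 0 ≤ γ) :
    IntervalIntegrable (fun t : ℝ => t^k * Wfn γ t) volume (-1) 1 :=
  ((continuous_pow k).mul (continuous_Wfn hγ)).intervalIntegrable _ _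

lemma Kint_split (m : ℕ) {γ : ℝ} (hγ : 0 ≤ γ) :
    Kint m (γ+1) = Kint m γ - Kint (m+1) γ := by
  unfold Kint
  rw [← intervalIntegral.integral_sub (intInt hγ) (intInt hγ)]
  refine intervalIntegral.integral_congr fun t _ => ?_
  rw [Wfn_succ (by linarith : (1:ℝ) ≤ γ+1) t, add_sub_cancel_right]
  have : t ^ (2*(m+1)) = t^(2*m) * t^2 := by
    rw [show 2*(m+1) = 2*m+2 from by ring, pow_add]
  rw [this]; ring

lemma Krec1 (m : ℕ) {γ : ℝ} (hγ : 0 ≤ γ) :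
    (2*(m:ℝ)+2*γ+3) * Kint (m+1) γ = (2*(m:ℝ)+1) * Kint m γ := by
  have hu : ∀ x ∈ Set.uIcc (-1:ℝ) 1, HasDerivAt (fun t : ℝ => t^(2*m+1))
      ((2*(m:ℝ)+1) * x^(2*m)) x := by
    intro x _
    have h0 := hasDerivAt_pow (2*m+1) x
    have e : ((2*m+1:ℕ):ℝ) * x^(2*m+1-1) = (2*(m:ℝ)+1) * x^(2*m) := by
      push_cast; norm_num
    rwa [e] at h0
  have hv : ∀ x ∈ Set.uIcc (-1:ℝ) 1, HasDerivAt (Wfn (γ+1))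
      (((γ+1) * (-2*x)) * Wfn γ x) x := by
    intro x _
    have := hasDerivAt_Wfn (by linarith : (1:ℝ) ≤ γ+1) x
    rwa [add_sub_cancel_right] at this
  have hi1 : IntervalIntegrable (fun x : ℝ => (2*(m:ℝ)+1) * x^(2*m)) volume (-1) 1 :=
    (by continuity : Continuous fun x : ℝ => (2*(m:ℝ)+1) * x^(2*m)).intervalIntegrable _ _
  have hi2 : IntervalIntegrable (fun x : ℝ => ((γ+1) * (-2*x)) * Wfn γ x) volume (-1) 1 :=
    (((by continuity : Continuous fun x : ℝ => (γ+1) * (-2*x))).mul (continuous_Wfn hγ)).intervalIntegrable _ _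
  have h := intervalIntegral.integral_mul_deriv_eq_deriv_mul hu hv hi1 hi2
  rw [Wfn_zero (by linarith : γ+1 ≠ 0) (by norm_num : (1:ℝ)^2 = 1),
      Wfn_zero (by linarith : γ+1 ≠ 0) (by norm_num : ((-1:ℝ))^2 = 1)] at h
  have e1 : (∫ x in (-1:ℝ)..1, x^(2*m+1) * (((γ+1) * (-2*x)) * Wfn γ x))
      = (-2*(γ+1)) * Kint (m+1) γ := by
    rw [Kint, ← intervalIntegral.integral_const_mul]
    refine intervalIntegral.integral_congr fun t _ => ?_
    have : t ^ (2*(m+1)) = t^(2*m+1) * t := by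
      rw [show 2*(m+1) = 2*m+1+1 from by ring, pow_succ]
    rw [this]; ring
  have e2 : (∫ x in (-1:ℝ)..1, ((2*(m:ℝ)+1) * x^(2*m)) * Wfn (γ+1) x)
      = (2*(m:ℝ)+1) * Kint m (γ+1) := by
    rw [Kint, ← intervalIntegral.integral_const_mul]
    refine intervalIntegral.integral_congr fun t _ => ?_
    ring
  rw [e1, e2] at h
  rw [Kint_split m hγ] at h
  -- h : -2(γ+1) K(m+1) = 1*0 - (-1)^(2m+1)*0 - (2m+1)(K m - K(m+1))
  have h' : (-2*(γ+1)) * Kint (m+1) γ = -((2*(m:ℝ)+1) * (Kint m γ - Kint (m+1) γ)) := by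
    rw [h]; ring
  linarith [h']

lemma Krec2 (m : ℕ) {γ : ℝ} (hγ : 0 ≤ γ) :
    (2*(m:ℝ)+2*γ+3) * Kint m (γ+1) = (2*γ+2) * Kint m γ := by
  rw [Kint_split m hγ, mul_sub]
  have := Krec1 m hγ
  linarith [this]

lemma Kpos (m : ℕ) {γ : ℝ} (hγ : 0 ≤ γ) : 0 < Kint m γ := by
  rw [Kint, intervalIntegral.integral_pos_iff_support_of_nonneg_ae' ?hnn (intInt hγ)]
  · constructor
    · norm_num
    · have hsub : Set.Ioo (0:ℝ) 1 ⊆ Function.support (fun t : ℝ => t^(2*m) * Wfn γ t) ∩ Set.Ioc (-1:ℝ) 1 := by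
        intro t ht
        obtain ⟨h0, h1⟩ := ht
        constructor
        · have hW : 0 < Wfn γ t := Real.rpow_pos_of_pos (by nlinarith) γ
          have : 0 < t^(2*m) * Wfn γ t := by positivity
          exact ne_of_gt this
        · exact ⟨by linarith, le_of_lt h1⟩
      calc (0:ENNReal) < volume (Set.Ioo (0:ℝ) 1) := by simp
        _ ≤ _ := measure_mono hsub
  case hnn =>
    rw [Set.uIoc_of_le (by norm_num : (-1:ℝ) ≤ 1)]
    refine (ae_restrict_iff' measurableSet_Ioc).2 (ae_of_all _ fun t ht => ?_)
    obtain ⟨h1, h2⟩ := ht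
    have : (0:ℝ) ≤ 1 - t^2 := by nlinarith
    have hW : 0 ≤ Wfn γ t := Real.rpow_nonneg this γ
    have ht2 : (0:ℝ) ≤ t^(2*m) := by rw [pow_mul]; exact pow_nonneg (sq_nonneg t) m
    exact mul_nonneg ht2 hW

lemma ibp_step {β : ℝ} {j k N : ℕ} (hk : k + 1 ≤ j) (hβj : (j:ℝ) ≤ β) (hβ1 : (j:ℝ) + 1 ≤ β + 1) :
    (∫ t in (-1:ℝ)..1, ((N.descFactorial k : ℝ) * t^(N-k)) * Phi β (j-k) t)
      = - ∫ t in (-1:ℝ)..1, ((N.descFactorial (k+1) : ℝ) * t^(N-(k+1))) * Phi β (j-(k+1)) t := by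
  have hsucc : (j - (k+1)) + 1 = j - k := by omega
  have hcast : ((j - (k+1) : ℕ):ℝ) + 1 ≤ β := by
    have h1 : ((j - (k+1) : ℕ):ℝ) + 1 = ((j - k : ℕ):ℝ) := by exact_mod_cast congrArg (Nat.cast (R := ℝ)) hsucc
    rw [h1]
    calc ((j - k : ℕ):ℝ) ≤ (j:ℝ) := by exact_mod_cast Nat.sub_le j k
    _ ≤ β := hβj
  have hv : ∀ x ∈ Set.uIcc (-1:ℝ) 1, HasDerivAt (Phi β (j-(k+1))) (Phi β (j-k) x) x := by
    intro x _
    have := hasDerivAt_Phi hcast x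
    rwa [hsucc] at this
  have hu : ∀ x ∈ Set.uIcc (-1:ℝ) 1, HasDerivAt (fun t : ℝ => ((N.descFactorial k : ℝ) * t^(N-k)))
      ((N.descFactorial (k+1) : ℝ) * x^(N-(k+1))) x := fun x _ => hasDerivAt_G N k x
  have hcont : Continuous (Phi β (j-(k+1))) := continuous_Phi (by linarith)
  have hcont' : Continuous (Phi β (j-k)) := continuous_Phi (by
    calc ((j - k : ℕ):ℝ) ≤ (j:ℝ) := by exact_mod_cast Nat.sub_le j k
    _ ≤ β := hβj)
  have hbdry : ∀ t : ℝ, t^2 = 1 → Phi β (j-(k+1)) t = 0 := by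
    intro t ht
    refine Phi_boundary ?_ ht
    calc ((j - (k+1) : ℕ):ℝ) < ((j - (k+1) : ℕ):ℝ) + 1 := by linarith
    _ ≤ β := hcast
  have h := intervalIntegral.integral_mul_deriv_eq_deriv_mul hu hv
    ((continuous_const.mul (continuous_pow _)).intervalIntegrable _ _)
    (hcont'.intervalIntegrable _ _)
  rw [h, hbdry 1 (by norm_num), hbdry (-1) (by norm_num)]
  simp

lemma ibp_chain {β : ℝ} {j N : ℕ} (hβj : (j:ℝ) ≤ β) :
    ∀ k, k ≤ j → (∫ t in (-1:ℝ)..1, t^N * Phi β j t)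
      = (-1)^k * ∫ t in (-1:ℝ)..1, ((N.descFactorial k : ℝ) * t^(N-k)) * Phi β (j-k) t
  | 0, _ => by simp
  | (k+1), hk => by
      rw [ibp_chain hβj k (by omega), ibp_step hk hβj (by linarith)]
      ring

lemma Kchain1 (a : ℕ) {γ : ℝ} (hγ : 0 ≤ γ) :
    ∀ m : ℕ, (∏ i ∈ range m, (2*((a:ℝ)+i) + 2*γ + 3)) * Kint (a+m) γ
      = (∏ i ∈ range m, (2*((a:ℝ)+i)+1)) * Kint a γ
  | 0 => by simp
  | (m+1) => by
      have ih := Kchain1 a hγ m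
      have h := Krec1 (a+m) hγ
      have hc : ((a+m:ℕ):ℝ) = (a:ℝ)+m := by push_cast; ring
      rw [hc] at h
      have e : a + (m+1) = a + m + 1 := by omega
      rw [e, prod_range_succ, prod_range_succ]
      linear_combination (∏ i ∈ range m, (2*((a:ℝ)+i) + 2*γ + 3)) * h
        + (2*((a:ℝ)+m)+1) * ih

lemma Kchain2 (a : ℕ) {γ : ℝ} (hγ : 0 ≤ γ) :
    ∀ p : ℕ, (∏ i ∈ range p, (2*(a:ℝ) + 2*(γ+i) + 3)) * Kint a (γ+p)
      = (∏ i ∈ range p, (2*(γ+i)+2)) * Kint a γ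
  | 0 => by simp
  | (p+1) => by
      have ih := Kchain2 a hγ p
      have h := Krec2 a (γ := γ + p) (by positivity)
      have e : γ + ((p+1:ℕ):ℝ) = γ + (p:ℝ) + 1 := by push_cast; ring
      rw [e, prod_range_succ, prod_range_succ]
      linear_combination (∏ i ∈ range p, (2*(a:ℝ) + 2*(γ+i) + 3)) * h
        + (2*(γ+(p:ℝ))+2) * ih

lemma Gamma_prod {ν : ℝ} (hν : 0 < ν) :
    ∀ j : ℕ, Real.Gamma ((j:ℝ) + ν) = (∏ i ∈ range j, (ν + i)) * Real.Gamma ν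
  | 0 => by simp
  | (j+1) => by
      have e : ((j+1:ℕ):ℝ) + ν = ((j:ℝ) + ν) + 1 := by push_cast; ring
      rw [e, Real.Gamma_add_one (by positivity), Gamma_prod hν j, prod_range_succ]
      ring

lemma descF_cast {N j : ℕ} (h : j ≤ N) :
    ((N.descFactorial j : ℕ):ℝ) = ∏ i ∈ range j, ((N:ℝ) - i) := by
  rw [Nat.descFactorial_eq_prod_range, Nat.cast_prod]
  refine prod_congr rfl fun i hi => ?_
  exact Nat.cast_sub (le_trans (mem_range.mp hi).le h)

lemma prod_range_even_odd (f : ℕ → ℝ) :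
    ∀ m : ℕ, ∏ i ∈ range (2*m), f i
      = (∏ i ∈ range m, f (2*i)) * (∏ i ∈ range m, f (2*i+1))
  | 0 => by simp
  | (m+1) => by
      rw [show 2*(m+1) = 2*m+1+1 from by ring, prod_range_succ, prod_range_succ,
        prod_range_even_odd f m, prod_range_succ, prod_range_succ]
      ring

lemma sum_aux (N : ℝ) : ∀ m : ℕ, (∑ i ∈ range m, (N + 4*(i:ℝ))) = m*N + 2*m*(m-1)
  | 0 => by simp
  | (m+1) => by
      rw [sum_range_succ, sum_aux N m]
      push_cast; ring

lemma prod_lower (L N : ℝ) (hN : 3 ≤ N) :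
    ∀ m : ℕ, (m:ℝ) ≤ L →
      (1 - (∑ i ∈ range m, (N + 4*(i:ℝ)))/(2*L+N)) * ∏ i ∈ range m, (2*L+N+2*i)
        ≤ ∏ i ∈ range m, (2*L-2*i)
  | 0, _ => by norm_num
  | (m+1), hm => by
      have hm' : (m:ℝ) ≤ L := by push_cast at hm ⊢; linarith
      have hL : (0:ℝ) ≤ L := le_trans (by positivity) hm'
      have hD : (0:ℝ) < 2*L+N := by linarith
      have ih := prod_lower L N hN m hm'
      have hS : (0:ℝ) ≤ ∑ i ∈ range m, (N + 4*(i:ℝ)) :=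
        sum_nonneg fun i _ => by positivity
      have hPO : (0:ℝ) < ∏ i ∈ range m, (2*L+N+2*i) :=
        prod_pos fun i _ => by positivity
      have hfac : (0:ℝ) ≤ 2*L-2*m := by
        push_cast at hm; linarith
      rw [prod_range_succ, prod_range_succ, sum_range_succ]
      set S := ∑ i ∈ range m, (N + 4*(i:ℝ)) with hSdef
      have key : (1 - (S + (N + 4*m))/(2*L+N)) * (2*L+N+2*m)
          ≤ (1 - S/(2*L+N)) * (2*L-2*m) := by
        rw [one_sub_div hD.ne', one_sub_div hD.ne', div_mul_eq_mul_div, div_mul_eq_mul_div,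
          div_le_div_iff_of_pos_right hD]
        nlinarith [mul_nonneg (by linarith : (0:ℝ) ≤ N + 4*(m:ℝ)) (by linarith : (0:ℝ) ≤ 2*(m:ℝ) + S)]
      calc (1 - (S + (N + 4*(m:ℝ)))/(2*L+N)) * ((∏ i ∈ range m, (2*L+N+2*i)) * (2*L+N+2*m))
          = ((1 - (S + (N + 4*(m:ℝ)))/(2*L+N)) * (2*L+N+2*m)) * (∏ i ∈ range m, (2*L+N+2*i)) := by
            ring
        _ ≤ ((1 - S/(2*L+N)) * (2*L-2*m)) * (∏ i ∈ range m, (2*L+N+2*i)) := by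
            exact mul_le_mul_of_nonneg_right key hPO.le
        _ = ((1 - S/(2*L+N)) * (∏ i ∈ range m, (2*L+N+2*i))) * (2*L-2*m) := by ring
        _ ≤ (∏ i ∈ range m, (2*L-2*i)) * (2*L-2*m) := mul_le_mul_of_nonneg_right ih hfac


end FunkHeckeAux

section FunkHeckeAux2
open Finset Polynomial

lemma sq_le_one_of_mem {t : ℝ} (ht : t ∈ Set.uIcc (-1:ℝ) 1) : t^2 ≤ 1 := by
  rw [Set.uIcc_of_le (by norm_num)] at ht
  obtain ⟨h1, h2⟩ := ht
  nlinarith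

lemma lamFH_zero {n ℓ : ℕ} (hn : 3 ≤ n) : lamFH n ℓ 0 = Kint ℓ (((n:ℝ)-3)/2) := by
  have hν : (0:ℝ) < ((n:ℝ)-1)/2 := by
    have : (3:ℝ) ≤ n := by exact_mod_cast hn
    linarith
  have hΓ : Real.Gamma (((n:ℝ)-1)/2) ≠ 0 := ne_of_gt (Real.Gamma_pos_of_pos hν)
  unfold lamFH Kint gegenbauerP
  refine intervalIntegral.integral_congr fun t ht => ?_
  have h2 := sq_le_one_of_mem ht
  simp only [pow_zero, Nat.cast_zero, zero_add, one_mul, iteratedDeriv_zero, div_self hΓ]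
  set δ := ((n:ℝ)-3)/2 with hδdef
  rcases eq_or_lt_of_le (by linarith : (0:ℝ) ≤ 1 - t^2) with h | h
  · rcases eq_or_ne δ 0 with h0 | h0
    · simp [Wfn, h0]
    · rw [← h]
      rw [Real.zero_rpow (neg_ne_zero.mpr h0), Real.zero_rpow h0]
      simp [Wfn, ← h, Real.zero_rpow h0]
  · have e : (1 - t^2) ^ (-δ) * (1 - t^2) ^ δ = 1 := by
      rw [← Real.rpow_add h, neg_add_cancel, Real.rpow_zero]
    simp only [Wfn]
    calc t ^ (2*ℓ) * ((1 - t^2) ^ (-δ) * (1 - t^2) ^ δ) * (1 - t^2) ^ δ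
        = t ^ (2*ℓ) * (1 - t^2) ^ δ * ((1 - t^2) ^ (-δ) * (1 - t^2) ^ δ) := by ring
      _ = t ^ (2*ℓ) * (1 - t^2) ^ δ := by rw [e]; ring

lemma lamFH_j {n ℓ j : ℕ} (hn : 3 ≤ n) (hj1 : 1 ≤ j) (hjl : j ≤ 2*ℓ) :
    lamFH n ℓ j = (1/2:ℝ)^j *
      (Real.Gamma (((n : ℝ) - 1) / 2) / Real.Gamma ((j : ℝ) + ((n : ℝ) - 1) / 2)) *
      ((2*ℓ).descFactorial j : ℝ) * ∫ t in (-1:ℝ)..1, t^(2*ℓ-j) * Wfn ((j:ℝ) + ((n:ℝ)-3)/2) t := by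
  set δ := ((n:ℝ)-3)/2 with hδdef
  have hδ : 0 ≤ δ := by
    have : (3:ℝ) ≤ n := by exact_mod_cast hn
    rw [hδdef]; linarith
  set β := (j:ℝ) + δ with hβdef
  set c := (-(1:ℝ)/2) ^ j * (Real.Gamma (((n : ℝ) - 1) / 2) / Real.Gamma ((j : ℝ) + ((n : ℝ) - 1) / 2)) with hc
  have hβj : (j:ℝ) ≤ β := by rw [hβdef]; linarith
  have step1 : lamFH n ℓ j = c * ∫ t in (-1:ℝ)..1, t^(2*ℓ) * Phi β j t := by
    rw [← intervalIntegral.integral_const_mul]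
    unfold lamFH gegenbauerP
    refine intervalIntegral.integral_congr fun t ht => ?_
    have h2 := sq_le_one_of_mem ht
    have hitd : iteratedDeriv j (fun s : ℝ => (1 - s ^ 2) ^ ((j : ℝ) + ((n : ℝ) - 3) / 2)) t
        = Phi β j t := by
      have := iteratedDeriv_Wfn_eq hβj (le_refl j)
      calc iteratedDeriv j (fun s : ℝ => (1 - s ^ 2) ^ ((j : ℝ) + ((n : ℝ) - 3) / 2)) t
          = iteratedDeriv j (Wfn β) t := rfl
        _ = Phi β j t := by rw [this]
    rw [hitd, ← hc, ← hδdef]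
    rcases eq_or_lt_of_le (by linarith : (0:ℝ) ≤ 1 - t^2) with h | h
    · have ht2 : t^2 = 1 := by linarith
      rcases eq_or_ne δ 0 with h0 | h0
      · simp [← h, h0]; ring
      · have hjβ : (j:ℝ) < β := by rw [hβdef]; rcases lt_or_eq_of_le hδ with h'|h'; linarith; exact absurd h'.symm h0
        rw [Phi_boundary hjβ ht2, ← h, Real.zero_rpow (neg_ne_zero.mpr h0)]
        ring
    · have e : (1 - t^2) ^ (-δ) * (1 - t^2) ^ δ = 1 := by
        rw [← Real.rpow_add h, neg_add_cancel, Real.rpow_zero]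
      calc t ^ (2*ℓ) * (c * (1 - t^2) ^ (-δ) * Phi β j t) * (1 - t^2) ^ δ
          = c * (t ^ (2*ℓ) * Phi β j t) * ((1 - t^2) ^ (-δ) * (1 - t^2) ^ δ) := by ring
        _ = c * (t ^ (2*ℓ) * Phi β j t) := by rw [e]; ring
  rw [step1, ibp_chain hβj j (le_refl j)]
  have hPhi0 : ∀ t : ℝ, Phi β 0 t = Wfn β t := by
    intro t; simp [Phi, gp]
  have : (∫ t in (-1:ℝ)..1, (((2*ℓ).descFactorial j : ℝ) * t^(2*ℓ-j)) * Phi β (j-j) t)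
      = ((2*ℓ).descFactorial j : ℝ) * ∫ t in (-1:ℝ)..1, t^(2*ℓ-j) * Wfn β t := by
    rw [← intervalIntegral.integral_const_mul]
    refine intervalIntegral.integral_congr fun t _ => ?_
    rw [Nat.sub_self, hPhi0]
    ring
  rw [this, hc]
  have : (-(1:ℝ)/2) ^ j * (-1:ℝ)^j = (1/2:ℝ)^j := by
    rw [← mul_pow]; norm_num
  calc (-(1:ℝ)/2) ^ j * (Real.Gamma (((n : ℝ) - 1) / 2) / Real.Gamma ((j : ℝ) + ((n : ℝ) - 1) / 2)) *
        ((-1:ℝ)^j * (((2*ℓ).descFactorial j : ℝ) * ∫ t in (-1:ℝ)..1, t^(2*ℓ-j) * Wfn β t))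
      = ((-(1:ℝ)/2) ^ j * (-1:ℝ)^j) * (Real.Gamma (((n : ℝ) - 1) / 2) / Real.Gamma ((j : ℝ) + ((n : ℝ) - 1) / 2)) *
        (((2*ℓ).descFactorial j : ℝ) * ∫ t in (-1:ℝ)..1, t^(2*ℓ-j) * Wfn β t) := by ring
    _ = _ := by rw [this]; ring

end FunkHeckeAux2
section FinalAssembly
open Finset

set_option maxHeartbeats 1000000 in
/-- For `n ≥ 3` and even `j` with `2 ≤ j ≤ 2ℓ`, if
`ε(j,ℓ,n) := 2j((j+n)/2 - 1)/(2ℓ+n) ≤ 1`, then `λ(n,ℓ,0)/λ(n,ℓ,j) - 1 ≤ ε(j,ℓ,n)`. -/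
theorem stmt5 (n ℓ j : ℕ) (hn : 3 ≤ n) (hj : Even j) (hj2 : 2 ≤ j) (hjℓ : j ≤ 2 * ℓ)
    (hε : 2 * (j : ℝ) * (((j : ℝ) + (n : ℝ)) / 2 - 1) / (2 * (ℓ : ℝ) + (n : ℝ)) ≤ 1) :
    lamFH n ℓ 0 / lamFH n ℓ j - 1 ≤
      2 * (j : ℝ) * (((j : ℝ) + (n : ℝ)) / 2 - 1) / (2 * (ℓ : ℝ) + (n : ℝ)) := by
  obtain ⟨m, hmm⟩ := hj
  have hm : j = 2*m := by omega
  subst hm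
  have hm1 : 1 ≤ m := by omega
  have hmℓ : m ≤ ℓ := by omega
  have hN : (3:ℝ) ≤ (n:ℝ) := by exact_mod_cast hn
  have hmL : (m:ℝ) ≤ (ℓ:ℝ) := by exact_mod_cast hmℓ
  have hL0 : (0:ℝ) ≤ (ℓ:ℝ) := Nat.cast_nonneg ℓ
  have hδ : (0:ℝ) ≤ ((n:ℝ)-3)/2 := by linarith
  have hν : (0:ℝ) < ((n:ℝ)-1)/2 := by linarith
  have hΓ : Real.Gamma (((n:ℝ)-1)/2) ≠ 0 := ne_of_gt (Real.Gamma_pos_of_pos hν)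
  -- abbreviations
  set δ : ℝ := ((n:ℝ)-3)/2 with hδdef
  set A : ℕ := ℓ - m with hAdef
  have hAm : A + m = ℓ := by omega
  have hA : ((A:ℕ):ℝ) = (ℓ:ℝ) - m := by
    rw [hAdef]; exact Nat.cast_sub hmℓ
  set a : ℝ := (ℓ:ℝ) - m with hadef
  have ha0 : 0 ≤ a := by rw [hadef]; linarith
  -- products
  set Q1 : ℝ := ∏ i ∈ range m, (2*(a+(i:ℝ))+1) with hQ1def
  set PA : ℝ := ∏ i ∈ range m, (2*(a+(i:ℝ)) + 2*δ + 3) with hPAdef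
  set PB : ℝ := ∏ i ∈ range m, (2*(ℓ:ℝ)+(n:ℝ)+2*(i:ℝ)) with hPBdef
  set E : ℝ := ∏ i ∈ range m, (2*(ℓ:ℝ)-2*(i:ℝ)) with hEdef
  set Pν : ℝ := ∏ i ∈ range (2*m), (((n:ℝ)-1)/2 + (i:ℝ)) with hPνdef
  have hQ1 : 0 < Q1 := prod_pos fun i _ => by
    have : (0:ℝ) ≤ (i:ℝ) := Nat.cast_nonneg i
    linarith
  have hPA : 0 < PA := prod_pos fun i _ => by
    have : (0:ℝ) ≤ (i:ℝ) := Nat.cast_nonneg i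
    linarith
  have hPB : 0 < PB := prod_pos fun i _ => by
    have : (0:ℝ) ≤ (i:ℝ) := Nat.cast_nonneg i
    linarith
  have hPν : 0 < Pν := prod_pos fun i _ => by
    have : (0:ℝ) ≤ (i:ℝ) := Nat.cast_nonneg i
    linarith
  have hK0 : 0 < Kint A δ := Kpos A hδ
  -- λ0
  have hlam0 : lamFH n ℓ 0 = Kint ℓ δ := lamFH_zero hn
  have hlam0pos : 0 < lamFH n ℓ 0 := by rw [hlam0]; exact Kpos ℓ hδ
  have chain1 := Kchain1 A hδ m
  rw [hAm, hA] at chain1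
  have g1 : lamFH n ℓ 0 * PA = Q1 * Kint A δ := by
    rw [hlam0, hPAdef, hQ1def]
    linarith [chain1]
  -- λj
  have hlamj : lamFH n ℓ (2*m) = (1/2:ℝ)^(2*m) *
      (Real.Gamma (((n : ℝ) - 1) / 2) / Real.Gamma (((2*m : ℕ) : ℝ) + ((n : ℝ) - 1) / 2)) *
      (((2*ℓ).descFactorial (2*m) : ℝ)) * Kint A (δ + ((2*m:ℕ):ℝ)) := by
    rw [lamFH_j hn (by omega) (by omega)]
    congr 1
    rw [Kint, show 2*A = 2*ℓ - 2*m from by omega]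
    refine intervalIntegral.integral_congr fun t _ => ?_
    rw [add_comm δ]
  have hΓr : Real.Gamma (((n:ℝ)-1)/2) / Real.Gamma (((2*m : ℕ) : ℝ) + ((n : ℝ) - 1) / 2) = Pν⁻¹ := by
    rw [Gamma_prod hν (2*m), ← hPνdef, mul_comm, ← div_div, div_self hΓ, one_div]
  have chain2 := Kchain2 A hδ (2*m)
  rw [hA] at chain2
  -- chain2 : (∏ i ∈ range (2m), (2*a + 2*(δ+i) + 3)) * Kint A (δ+↑(2m)) = (∏ (2*(δ+i)+2)) * Kint A δ
  have f1 : (∏ i ∈ range (2*m), (2*a + 2*(δ+(i:ℝ)) + 3)) = PA * PB := by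
    rw [two_mul m, prod_range_add, hPAdef, hPBdef]
    congr 1
    · exact prod_congr rfl fun i _ => by ring
    · refine prod_congr rfl fun i _ => ?_
      have : ((m + i : ℕ):ℝ) = (m:ℝ) + i := by push_cast; ring
      rw [this, hadef, hδdef]; ring
  have f2 : (∏ i ∈ range (2*m), (2*(δ+(i:ℝ))+2)) = 2^(2*m) * Pν := by
    rw [hPνdef, show (2:ℝ)^(2*m) = ∏ _i ∈ range (2*m), (2:ℝ) from by
      rw [prod_const, card_range], ← prod_mul_distrib]
    refine prod_congr rfl fun i _ => ?_
    rw [hδdef]; ring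
  have f3 : (((2*ℓ).descFactorial (2*m) : ℕ):ℝ) = E * Q1 := by
    rw [descF_cast hjℓ, prod_range_even_odd (fun i => (((2*ℓ:ℕ):ℝ) - i)) m, hEdef, hQ1def]
    congr 1
    · exact prod_congr rfl fun i _ => by push_cast; ring
    · rw [← prod_range_reflect (fun i => (2*(a+(i:ℝ))+1)) m]
      refine prod_congr rfl fun i hi => ?_
      have him : i < m := mem_range.mp hi
      have hc : ((m - 1 - i : ℕ):ℝ) = (m:ℝ) - 1 - i := by
        rw [Nat.cast_sub (by omega), Nat.cast_sub (by omega)]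
        push_cast; ring
      rw [hc, hadef]
      push_cast
      ring
  have g2 : lamFH n ℓ (2*m) * (PA * PB) = E * (Q1 * Kint A δ) := by
    rw [hlamj, hΓr, f3]
    have h2 : (1/2:ℝ)^(2*m) * 2^(2*m) = 1 := by
      rw [← mul_pow]; norm_num
    calc (1/2:ℝ)^(2*m) * Pν⁻¹ * (E * Q1) * Kint A (δ + ((2*m:ℕ):ℝ)) * (PA * PB)
        = (1/2:ℝ)^(2*m) * Pν⁻¹ * (E * Q1) *
            ((∏ i ∈ range (2*m), (2*a + 2*(δ+(i:ℝ)) + 3)) * Kint A (δ + ((2*m:ℕ):ℝ))) := by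
          rw [f1]; ring
      _ = (1/2:ℝ)^(2*m) * Pν⁻¹ * (E * Q1) *
            ((∏ i ∈ range (2*m), (2*(δ+(i:ℝ))+2)) * Kint A δ) := by rw [chain2]
      _ = ((1/2:ℝ)^(2*m) * 2^(2*m)) * (Pν⁻¹ * Pν) * (E * (Q1 * Kint A δ)) := by
          rw [f2]; ring
      _ = E * (Q1 * Kint A δ) := by
          rw [h2, inv_mul_cancel₀ (ne_of_gt hPν)]; ring
  -- the sum / epsilon
  set S : ℝ := ∑ i ∈ range m, ((n:ℝ) + 4*(i:ℝ)) with hSdef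
  have hS0 : 0 ≤ S := sum_nonneg fun i _ => by positivity
  have hD : (0:ℝ) < 2*(ℓ:ℝ)+(n:ℝ) := by linarith
  have hSsum : S = (m:ℝ)*(n:ℝ) + 2*(m:ℝ)*((m:ℝ)-1) := sum_aux (n:ℝ) m
  have hεα : 2 * ((2*m : ℕ) : ℝ) * ((((2*m : ℕ) : ℝ) + (n : ℝ)) / 2 - 1) / (2 * (ℓ : ℝ) + (n : ℝ))
      = 2 * (S / (2*(ℓ:ℝ)+(n:ℝ))) := by
    rw [hSsum]
    push_cast
    field_simp
    ring
  rw [hεα] at hε ⊢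
  set α : ℝ := S / (2*(ℓ:ℝ)+(n:ℝ)) with hαdef
  have hα0 : 0 ≤ α := div_nonneg hS0 hD.le
  have hα2 : α ≤ 1/2 := by linarith
  -- lower bound for E
  have hlow : (1 - α) * PB ≤ E := by
    have := prod_lower (ℓ:ℝ) (n:ℝ) hN m hmL
    rw [← hSdef, ← hPBdef, ← hEdef, ← hαdef] at this
    exact this
  -- λj ≥ (1-α) λ0
  have hmain : (1 - α) * lamFH n ℓ 0 ≤ lamFH n ℓ (2*m) := by
    have hPApos : (0:ℝ) < PA * PB := by positivity
    rw [← mul_le_mul_iff_of_pos_right hPApos]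
    calc (1 - α) * lamFH n ℓ 0 * (PA * PB)
        = ((1 - α) * PB) * (lamFH n ℓ 0 * PA) := by ring
      _ = ((1 - α) * PB) * (Q1 * Kint A δ) := by rw [g1]
      _ ≤ E * (Q1 * Kint A δ) := by
          refine mul_le_mul_of_nonneg_right hlow ?_
          positivity
      _ = lamFH n ℓ (2*m) * (PA * PB) := g2.symm
  have hlamjpos : 0 < lamFH n ℓ (2*m) := by
    have h12 : (1/2:ℝ) * lamFH n ℓ 0 ≤ (1-α) * lamFH n ℓ 0 :=
      mul_le_mul_of_nonneg_right (by linarith) hlam0pos.le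
    linarith
  have hstep : lamFH n ℓ 0 / lamFH n ℓ (2*m) ≤ 1 / (1 - α) := by
    have h1α : (0:ℝ) < 1 - α := by linarith
    have h2 : lamFH n ℓ 0 / lamFH n ℓ (2*m) ≤ lamFH n ℓ 0 / ((1-α) * lamFH n ℓ 0) :=
      div_le_div_of_nonneg_left hlam0pos.le (by positivity) hmain
    have h3 : lamFH n ℓ 0 / ((1-α) * lamFH n ℓ 0) = 1 / (1-α) := by
      rw [mul_comm, ← div_div, div_self (ne_of_gt hlam0pos)]
    linarith
  have hfin : 1 / (1 - α) - 1 ≤ 2 * α := by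
    have h1α : (0:ℝ) < 1 - α := by linarith
    rw [div_sub_one (ne_of_gt h1α), div_le_iff₀ h1α]
    have hq : 0 ≤ α * (1 - 2*α) := mul_nonneg hα0 (by linarith)
    linarith [hq]
  linarith

end FinalAssembly
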